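/- arXiv:1710.03782 — 2 statements merged into one kernel-verified Lean document; each statement's English description precedes it below -/
import Mathlib

section
/- Let c₀ > 0 and let F : [R₀,∞) → ℝ be continuous with ∫_{R₀}^∞ |F(r)| dr < ∞. Then every solution y ∈ C²([R₀,∞)) of the ODE y'' + (c₀ + F(r)) y = 0 is bounded on [R₀,∞). -/
open MeasureTheory

/-- Dini–Hukuwara: if `c₀ > 0` and `F` is continuous and absolutely integrable on `[R₀,∞)`,
then every `C²` solution of `y'' + (c₀ + F(r)) y = 0` on `[R₀,∞)` is bounded. -/
theorem stmt_7 (c₀ R₀ : ℝ) (hc : 0 < c₀) (F : ℝ → ℝ)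
    (hFcont : ContinuousOn F (Set.Ici R₀))
    (hFint : IntegrableOn (fun r => |F r|) (Set.Ici R₀))
    (y y' y'' : ℝ → ℝ)
    (hy : ∀ r ∈ Set.Ici R₀, HasDerivAt y (y' r) r)
    (hy' : ∀ r ∈ Set.Ici R₀, HasDerivAt y' (y'' r) r)
    (hy''cont : ContinuousOn y'' (Set.Ici R₀))
    (hode : ∀ r ∈ Set.Ici R₀, y'' r + (c₀ + F r) * y r = 0) :
    ∃ M : ℝ, ∀ r ∈ Set.Ici R₀, |y r| ≤ M := by
  set s : ℝ := Real.sqrt c₀ with hs_def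
  have hs : 0 < s := Real.sqrt_pos.2 hc
  have hssq : s * s = c₀ := Real.mul_self_sqrt hc.le
  set g : ℝ → ℝ := fun t => |F t| / s with hg_def
  have hg_nonneg : ∀ t, 0 ≤ g t := fun t => div_nonneg (abs_nonneg _) hs.le
  have hg_cont : ContinuousOn g (Set.Ici R₀) := hFcont.abs.div_const s
  have hg_int : IntegrableOn g (Set.Ici R₀) := hFint.div_const s
  set φ : ℝ → ℝ := fun r => ∫ t in R₀..r, g t with hφ_def
  have hg_ii : ∀ r ∈ Set.Ici R₀, IntervalIntegrable g volume R₀ r := by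
    intro r hr
    exact (hg_int.mono_set (by rw [Set.uIcc_of_le hr]; exact Set.Icc_subset_Ici_self)).intervalIntegrable
  set K : ℝ := ∫ t in Set.Ici R₀, g t with hK_def
  have hφ_le : ∀ r ∈ Set.Ici R₀, φ r ≤ K := by
    intro r hr
    have h1 : φ r = ∫ t in Set.Ioc R₀ r, g t := intervalIntegral.integral_of_le hr
    rw [h1, hK_def]
    refine setIntegral_mono_set hg_int ?_ ?_
    · exact Filter.Eventually.of_forall fun t => hg_nonneg t
    · exact HasSubset.Subset.eventuallyLE (fun t ht => ht.1.le)
  set E : ℝ → ℝ := fun r => y' r * y' r + c₀ * (y r * y r) with hE_def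
  have hE : ∀ r ∈ Set.Ici R₀, HasDerivAt E (-2 * F r * (y r * y' r)) r := by
    intro r hr
    have h1 := ((hy' r hr).mul (hy' r hr)).add (((hy r hr).mul (hy r hr)).const_mul c₀)
    refine h1.congr_deriv ?_
    have hyy : y'' r = -(c₀ + F r) * y r := by linarith [hode r hr]
    rw [hyy]; ring
  have hE_nonneg : ∀ r, 0 ≤ E r := by
    intro r
    show 0 ≤ y' r * y' r + c₀ * (y r * y r)
    nlinarith [mul_self_nonneg (y' r), mul_self_nonneg (y r)]
  -- derivative of φ
  have hmeas : AEStronglyMeasurable g (volume.restrict (Set.Ici R₀)) :=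
    hg_int.aestronglyMeasurable
  have hφR₀ : HasDerivWithinAt φ (g R₀) (Set.Ici R₀) R₀ := by
    refine intervalIntegral.integral_hasDerivWithinAt_right
      (hg_ii R₀ Set.self_mem_Ici) (t := Set.Ioi R₀) ?_ ?_
    · exact AEStronglyMeasurable.stronglyMeasurableAtFilter_of_mem hmeas
        (Filter.mem_of_superset self_mem_nhdsWithin Set.Ioi_subset_Ici_self)
    · exact (hg_cont R₀ Set.self_mem_Ici).mono Set.Ioi_subset_Ici_self
  have hφint : ∀ x ∈ Set.Ioi R₀, HasDerivAt φ (g x) x := by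
    intro x hx
    refine intervalIntegral.integral_hasDerivAt_right (hg_ii x (Set.Ioi_subset_Ici_self hx)) ?_ ?_
    · exact AEStronglyMeasurable.stronglyMeasurableAtFilter_of_mem hmeas (Ici_mem_nhds hx)
    · exact hg_cont.continuousAt (Ici_mem_nhds hx)
  have hφ_cont : ContinuousOn φ (Set.Ici R₀) := by
    intro r hr
    rcases eq_or_lt_of_le (Set.mem_Ici.1 hr) with h | h
    · subst h; exact hφR₀.continuousWithinAt
    · exact ((hφint r h).continuousAt).continuousWithinAt
  set G : ℝ → ℝ := fun r => E r * Real.exp (-φ r) with hG_def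
  have hG_cont : ContinuousOn G (Set.Ici R₀) := by
    refine ContinuousOn.mul ?_ (Real.continuous_exp.comp_continuousOn hφ_cont.neg)
    exact fun r hr => ((hE r hr).continuousAt).continuousWithinAt
  have key : ∀ x ∈ Set.Ici R₀, -2 * F x * (y x * y' x) ≤ E x * g x := by
    intro x _
    have h1 : -(2 * F x * (y x * y' x)) ≤ 2 * |F x| * (|y x| * |y' x|) := by
      calc -(2 * F x * (y x * y' x)) ≤ |2 * F x * (y x * y' x)| := neg_le_abs _
        _ = 2 * |F x| * (|y x| * |y' x|) := by
            rw [abs_mul, abs_mul, abs_mul]; norm_num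
    have h2 : 2 * (|y x| * |y' x|) * s ≤ |y' x| * |y' x| + (s * s) * (|y x| * |y x|) := by
      nlinarith [sq_nonneg (|y' x| - s * |y x|)]
    have hEabs : E x = |y' x| * |y' x| + c₀ * (|y x| * |y x|) := by
      simp only [hE_def, abs_mul_abs_self]
    rw [hg_def]
    rw [mul_div_assoc', le_div_iff₀ hs]
    rw [hEabs, ← hssq]
    nlinarith [h1, h2, abs_nonneg (F x), hs.le, abs_nonneg (y x), abs_nonneg (y' x)]
  have hG_deriv : ∀ x ∈ Set.Ioi R₀, deriv G x ≤ 0 ∧ DifferentiableAt ℝ G x := by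
    intro x hx
    have hxI : x ∈ Set.Ici R₀ := Set.Ioi_subset_Ici_self hx
    have hexp : HasDerivAt (fun r => Real.exp (-φ r)) (Real.exp (-φ x) * (-(g x))) x :=
      ((hφint x hx).neg).exp
    have hG : HasDerivAt G (-2 * F x * (y x * y' x) * Real.exp (-φ x) +
        E x * (Real.exp (-φ x) * (-(g x)))) x := (hE x hxI).mul hexp
    refine ⟨?_, hG.differentiableAt⟩
    rw [hG.deriv]
    have hk := key x hxI
    nlinarith [mul_le_mul_of_nonneg_right hk (Real.exp_pos (-φ x)).le,
      Real.exp_pos (-φ x)]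
  have hanti : AntitoneOn G (Set.Ici R₀) := by
    refine antitoneOn_of_deriv_nonpos (convex_Ici R₀) hG_cont ?_ ?_
    · intro x hx
      rw [interior_Ici] at hx
      exact ((hG_deriv x hx).2).differentiableWithinAt
    · intro x hx
      rw [interior_Ici] at hx
      exact (hG_deriv x hx).1
  have hφR₀0 : φ R₀ = 0 := intervalIntegral.integral_same
  set C : ℝ := E R₀ * Real.exp K with hC_def
  have hEC : ∀ r ∈ Set.Ici R₀, E r ≤ C := by
    intro r hr
    have h1 : G r ≤ G R₀ := hanti Set.self_mem_Ici hr hr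
    have h2 : G R₀ = E R₀ := by simp [hG_def, hφR₀0]
    have h3 : E r ≤ E R₀ * Real.exp (φ r) := by
      have hGr : E r * Real.exp (-φ r) ≤ E R₀ := h2 ▸ h1
      calc E r = E r * Real.exp (-φ r) * Real.exp (φ r) := by
            rw [mul_assoc, ← Real.exp_add]; simp
        _ ≤ E R₀ * Real.exp (φ r) :=
            mul_le_mul_of_nonneg_right hGr (Real.exp_pos _).le
    calc E r ≤ E R₀ * Real.exp (φ r) := h3
      _ ≤ E R₀ * Real.exp K :=
          mul_le_mul_of_nonneg_left (Real.exp_le_exp.2 (hφ_le r hr)) (hE_nonneg R₀)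
  have hC_nonneg : 0 ≤ C := le_trans (hE_nonneg R₀) (hEC R₀ Set.self_mem_Ici)
  refine ⟨Real.sqrt (C / c₀), fun r hr => ?_⟩
  have h1 : y r * y r ≤ C / c₀ := by
    rw [le_div_iff₀ hc]
    have h2 := hEC r hr
    simp only [hE_def] at h2
    nlinarith [mul_self_nonneg (y' r)]
  calc |y r| = Real.sqrt (y r * y r) := (Real.sqrt_mul_self_eq_abs _).symm
    _ ≤ Real.sqrt (C / c₀) := Real.sqrt_le_sqrt h1
end

section
/- Let n ≥ 2, c₀ > 0, μ ≥ 0, R₀ > 0, and let F : [R₀,∞) → ℝ be continuous with |F(r)| ≤ C(1+r)^{−1−ε} for some ε > 0. If w ∈ C²([R₀,∞)) solves w'' + ((n−1)/r) w' + (c₀ + F(r) − μ/r²) w = 0, then there is a constant C' such that |w(r)| ≤ C'(1+r)^{−(n−1)/2} for all r ≥ R₀. -/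
set_option maxHeartbeats 1000000 in
/-- If `w` solves the radial equation `w'' + ((n-1)/r) w' + (c₀ + F(r) - μ/r²) w = 0` on `[R₀,∞)`
with `c₀ > 0` and `|F(r)| ≤ C(1+r)^{-1-ε}`, then `|w(r)| ≤ C'(1+r)^{-(n-1)/2}`. -/
theorem stmt_8 (n : ℕ) (hn : 2 ≤ n) (c₀ μ R₀ C ε : ℝ) (hc : 0 < c₀) (hμ : 0 ≤ μ)
    (hR : 0 < R₀) (hε : 0 < ε) (F : ℝ → ℝ) (hFcont : ContinuousOn F (Set.Ici R₀))
    (hF : ∀ r ∈ Set.Ici R₀, |F r| ≤ C * (1 + r) ^ (-1 - ε))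
    (w w' w'' : ℝ → ℝ)
    (hw : ∀ r ∈ Set.Ici R₀, HasDerivAt w (w' r) r)
    (hw' : ∀ r ∈ Set.Ici R₀, HasDerivAt w' (w'' r) r)
    (hw''cont : ContinuousOn w'' (Set.Ici R₀))
    (hode : ∀ r ∈ Set.Ici R₀,
      w'' r + ((n : ℝ) - 1) / r * w' r + (c₀ + F r - μ / r ^ 2) * w r = 0) :
    ∃ C' : ℝ, ∀ r ∈ Set.Ici R₀, |w r| ≤ C' * (1 + r) ^ (-((n : ℝ) - 1) / 2) := by
  have hn2 : (2:ℝ) ≤ (n:ℝ) := by exact_mod_cast hn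
  set α : ℝ := ((n:ℝ)-1)/2 with hαdef
  have hα0 : 0 < α := by rw [hαdef]; linarith
  set A : ℝ := |C| with hAdef
  set B : ℝ := |μ + α*(α-1)| with hBdef
  have hA0 : 0 ≤ A := abs_nonneg _
  have hB0 : 0 ≤ B := abs_nonneg _
  set K : ℝ := 1 + 1/c₀ with hKdef
  have hK0 : 0 < K := by positivity
  set y : ℝ → ℝ := fun r => r ^ α * w r with hydef
  set z : ℝ → ℝ := fun r => α * r ^ (α-1) * w r + r ^ α * w' r with hzdef
  set z2 : ℝ → ℝ := fun r =>
    α*(α-1) * r^(α-2) * w r + (2*α)*r^(α-1)*w' r + r^α * w'' r with hz2def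
  have hrpos : ∀ r ∈ Set.Ici R₀, 0 < r := fun r hr => lt_of_lt_of_le hR hr
  have hy : ∀ r ∈ Set.Ici R₀, HasDerivAt y (z r) r := by
    intro r hr
    have h0 : r ≠ 0 := (hrpos r hr).ne'
    have h1 : HasDerivAt (fun x : ℝ => x ^ α) (α * r ^ (α-1)) r :=
      Real.hasDerivAt_rpow_const (Or.inl h0)
    exact h1.mul (hw r hr)
  have hz : ∀ r ∈ Set.Ici R₀, HasDerivAt z (z2 r) r := by
    intro r hr
    have h0 : r ≠ 0 := (hrpos r hr).ne'
    have h1 : HasDerivAt (fun x : ℝ => x ^ α) (α * r ^ (α-1)) r :=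
      Real.hasDerivAt_rpow_const (Or.inl h0)
    have h2 : HasDerivAt (fun x : ℝ => x ^ (α-1)) ((α-1) * r ^ (α-2)) r := by
      have := Real.hasDerivAt_rpow_const (x := r) (p := α-1) (Or.inl h0)
      simpa [show α-1-1 = α-2 by ring] using this
    have h3 : HasDerivAt (fun x : ℝ => α * x ^ (α-1) * w x)
        (α * ((α-1) * r ^ (α-2)) * w r + α * r ^ (α-1) * w' r) r := by
      have := ((h2.const_mul α).mul (hw r hr))
      exact this
    have h4 : HasDerivAt (fun x : ℝ => x ^ α * w' x)
        (α * r ^ (α-1) * w' r + r ^ α * w'' r) r := h1.mul (hw' r hr)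
    have := h3.add h4
    exact this.congr_deriv (by simp only [hz2def]; ring)
  have hodez : ∀ r ∈ Set.Ici R₀,
      z2 r = -((c₀ + (F r - (μ + α*(α-1))/r^2)) * y r) := by
    intro r hr
    have hr0 : 0 < r := hrpos r hr
    have h0 : r ≠ 0 := hr0.ne'
    have h2α : (n:ℝ) - 1 = 2*α := by rw [hαdef]; ring
    have hw2 : w'' r = -((2*α)/r * w' r + (c₀ + F r - μ/r^2) * w r) := by
      have := hode r hr; rw [h2α] at this; linarith
    have e1 : r^(α-1) = r^α / r := by
      rw [Real.rpow_sub hr0, Real.rpow_one]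
    have e2 : r^(α-2) = r^α / r^2 := by
      rw [Real.rpow_sub hr0, show ((2:ℝ)) = ((2:ℕ):ℝ) by norm_num, Real.rpow_natCast]
    simp only [hz2def, hydef]
    rw [hw2, e1, e2]
    field_simp
    ring
  set E : ℝ → ℝ := fun r => z r^2 + c₀ * y r^2 with hEdef
  have hE0 : ∀ r, 0 ≤ E r := by intro r; simp only [hEdef]; positivity
  have hE : ∀ r ∈ Set.Ici R₀,
      HasDerivAt E (2 * z r * z2 r + c₀ * (2 * y r * z r)) r := by
    intro r hr
    have h1 := (hz r hr).pow 2
    have h2 := ((hy r hr).pow 2).const_mul c₀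
    have := h1.add h2
    exact this.congr_deriv (by push_cast; ring)
  set Φ : ℝ → ℝ := fun r => -(A/ε) * (1+r)^(-ε) - B * r⁻¹ with hΦdef
  set g : ℝ → ℝ := fun r => A * (1+r)^(-ε-1) + B * (r^2)⁻¹ with hgdef
  have hΦ : ∀ r ∈ Set.Ici R₀, HasDerivAt Φ (g r) r := by
    intro r hr
    have hr0 : 0 < r := hrpos r hr
    have h1r : (0:ℝ) < 1 + r := by linarith
    have hb : HasDerivAt (fun x : ℝ => 1 + x) 1 r := (hasDerivAt_id r).const_add 1
    have h3 : HasDerivAt (fun x : ℝ => (1+x)^(-ε)) (1 * (-ε) * (1+r)^(-ε-1)) r := by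
      have := hb.rpow_const (p := -ε) (Or.inl h1r.ne')
      simpa [show -ε-1 = -ε-1 by ring] using this
    have h4 : HasDerivAt (fun x : ℝ => x⁻¹) (-(r^2)⁻¹) r := hasDerivAt_inv hr0.ne'
    have := (h3.const_mul (-(A/ε))).sub (h4.const_mul B)
    exact this.congr_deriv (by simp only [hgdef]; field_simp; ring)
  have hg0 : ∀ r ∈ Set.Ici R₀, 0 ≤ g r := by
    intro r hr
    have hr0 : 0 < r := hrpos r hr
    have h1r : (0:ℝ) ≤ 1 + r := by linarith
    simp only [hgdef]
    have := Real.rpow_nonneg h1r (-ε-1)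
    positivity
  have hGb : ∀ r ∈ Set.Ici R₀, |F r - (μ + α*(α-1))/r^2| ≤ g r := by
    intro r hr
    have hr0 : 0 < r := hrpos r hr
    have h1r : (0:ℝ) < 1 + r := by linarith
    have h1 : |F r| ≤ A * (1+r)^(-ε-1) := by
      refine (hF r hr).trans ?_
      rw [show -ε-1 = -1-ε by ring]
      have : (0:ℝ) ≤ (1+r)^(-1-ε) := Real.rpow_nonneg h1r.le _
      exact mul_le_mul_of_nonneg_right (le_abs_self C) this
    have h2 : |(μ + α*(α-1))/r^2| = B * (r^2)⁻¹ := by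
      rw [abs_div, hBdef, abs_of_nonneg (by positivity : (0:ℝ) ≤ r^2), div_eq_mul_inv]
    calc |F r - (μ + α*(α-1))/r^2| ≤ |F r| + |(μ + α*(α-1))/r^2| := abs_sub _ _
      _ ≤ A * (1+r)^(-ε-1) + B * (r^2)⁻¹ := by rw [h2]; exact add_le_add_left h1 _
      _ = g r := by simp only [hgdef]
  have hEineq : ∀ r ∈ Set.Ici R₀,
      2 * z r * z2 r + c₀ * (2 * y r * z r) ≤ K * g r * E r := by
    intro r hr
    set G : ℝ := F r - (μ + α*(α-1))/r^2 with hGdef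
    have heq : 2 * z r * z2 r + c₀ * (2 * y r * z r) = -2 * G * y r * z r := by
      rw [hodez r hr]; ring
    have h1 : -2 * G * y r * z r ≤ 2 * |G| * |y r| * |z r| := by
      calc -2 * G * y r * z r ≤ |(-2) * G * y r * z r| := le_abs_self _
        _ = 2 * |G| * |y r| * |z r| := by
          rw [abs_mul, abs_mul, abs_mul]; norm_num
    have h2 : 2 * |y r| * |z r| ≤ y r^2 + z r^2 := by
      nlinarith [sq_nonneg (|y r| - |z r|), sq_abs (y r), sq_abs (z r)]
    have h3 : y r^2 + z r^2 ≤ K * E r := by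
      have key : K * E r = y r^2 + z r^2 + (c₀ * y r^2 + (1/c₀) * z r^2) := by
        simp only [hKdef, hEdef]
        field_simp
        ring
      have hpos : 0 ≤ c₀ * y r^2 + (1/c₀) * z r^2 := by positivity
      calc y r^2 + z r^2 ≤ y r^2 + z r^2 + (c₀ * y r^2 + (1/c₀) * z r^2) :=
            le_add_of_nonneg_right hpos
        _ = K * E r := key.symm
    have h4 : 2 * |G| * |y r| * |z r| ≤ g r * (y r^2 + z r^2) := by
      have := mul_le_mul (hGb r hr) h2 (by positivity) (hg0 r hr)
      calc 2 * |G| * |y r| * |z r| = |G| * (2 * |y r| * |z r|) := by ring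
        _ ≤ g r * (y r^2 + z r^2) := this
    have h5 : g r * (y r^2 + z r^2) ≤ g r * (K * E r) :=
      mul_le_mul_of_nonneg_left h3 (hg0 r hr)
    rw [heq]
    calc -2 * G * y r * z r ≤ 2 * |G| * |y r| * |z r| := h1
      _ ≤ g r * (y r^2 + z r^2) := h4
      _ ≤ g r * (K * E r) := h5
      _ = K * g r * E r := by ring
  set H : ℝ → ℝ := fun r => E r * Real.exp (-(K * Φ r)) with hHdef
  have hH : ∀ r ∈ Set.Ici R₀, HasDerivAt H
      ((2 * z r * z2 r + c₀ * (2 * y r * z r) - K * g r * E r) * Real.exp (-(K * Φ r))) r := by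
    intro r hr
    have hexp : HasDerivAt (fun x => Real.exp (-(K * Φ x)))
        (Real.exp (-(K * Φ r)) * (-(K * g r))) r := (((hΦ r hr).const_mul K).neg).exp
    have := (hE r hr).mul hexp
    exact this.congr_deriv (by ring)
  have hHnonpos : ∀ r ∈ Set.Ici R₀,
      (2 * z r * z2 r + c₀ * (2 * y r * z r) - K * g r * E r) * Real.exp (-(K * Φ r)) ≤ 0 := by
    intro r hr
    apply mul_nonpos_of_nonpos_of_nonneg
    · linarith [hEineq r hr]
    · exact (Real.exp_pos _).le
  have hHanti : AntitoneOn H (Set.Ici R₀) := by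
    apply antitoneOn_of_deriv_nonpos (convex_Ici R₀)
    · exact fun r hr => ((hH r hr).continuousAt).continuousWithinAt
    · intro x hx
      rw [interior_Ici] at hx
      exact ((hH x (Set.mem_Ici.2 (le_of_lt hx))).differentiableAt).differentiableWithinAt
    · intro x hx
      rw [interior_Ici] at hx
      have hx' : x ∈ Set.Ici R₀ := Set.mem_Ici.2 (le_of_lt hx)
      rw [(hH x hx').deriv]
      exact hHnonpos x hx'
  set M : ℝ := H R₀ with hMdef
  refine ⟨Real.sqrt (M/c₀) * (1+1/R₀)^α, ?_⟩
  intro r hr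
  have hr0 : 0 < r := hrpos r hr
  have h1r : (0:ℝ) < 1 + r := by linarith
  -- E r ≤ M
  have hΦ0 : Φ r ≤ 0 := by
    simp only [hΦdef]
    have h1 : 0 ≤ (A/ε) * (1+r)^(-ε) := by
      have := Real.rpow_nonneg h1r.le (-ε); positivity
    have h2 : 0 ≤ B * r⁻¹ := by positivity
    linarith
  have hexp1 : 1 ≤ Real.exp (-(K * Φ r)) := by
    apply Real.one_le_exp
    nlinarith
  have hEM : E r ≤ M := by
    have h5 : H r ≤ H R₀ := hHanti (Set.self_mem_Ici) hr hr
    calc E r = E r * 1 := (mul_one _).symm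
      _ ≤ E r * Real.exp (-(K * Φ r)) := mul_le_mul_of_nonneg_left hexp1 (hE0 r)
      _ = H r := rfl
      _ ≤ M := h5
  have hy2 : (y r)^2 ≤ M / c₀ := by
    have : c₀ * (y r)^2 ≤ M := by
      have := hE0 r
      have hzr : 0 ≤ z r ^ 2 := sq_nonneg _
      simp only [hEdef] at hEM
      linarith [sq_nonneg (z r)]
    rw [le_div_iff₀ hc, mul_comm]
    linarith [this]
  have hyb : |y r| ≤ Real.sqrt (M / c₀) := by
    rw [← Real.sqrt_sq_eq_abs]
    exact Real.sqrt_le_sqrt hy2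
  have hrα : (0:ℝ) < r ^ α := Real.rpow_pos_of_pos hr0 α
  have h7 : |w r| = |y r| * (r ^ α)⁻¹ := by
    have : |y r| = r ^ α * |w r| := by
      simp only [hydef]; rw [abs_mul, abs_of_pos hrα]
    rw [this]
    field_simp
  have hbase : r⁻¹ ≤ (1+1/R₀)/(1+r) := by
    rw [inv_eq_one_div, div_le_div_iff₀ hr0 h1r]
    have h6 : 1 ≤ r / R₀ := (one_le_div hR).2 hr
    have h6' : R₀ ≤ r := hr
    have h8 : (1+1/R₀)*r = r + r/R₀ := by ring
    rw [h8]
    have h9 : (1:ℝ) ≤ r/R₀ := h6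
    linarith
  have hpow : (r ^ α)⁻¹ ≤ (1+1/R₀)^α * (1+r)^(-α) := by
    calc (r^α)⁻¹ = (r⁻¹)^α := (Real.inv_rpow hr0.le α).symm
      _ ≤ ((1+1/R₀)/(1+r))^α := Real.rpow_le_rpow (inv_nonneg.2 hr0.le) hbase hα0.le
      _ = (1+1/R₀)^α * ((1+r)^α)⁻¹ := by
          rw [Real.div_rpow (by positivity) h1r.le, div_eq_mul_inv]
      _ = (1+1/R₀)^α * (1+r)^(-α) := by rw [Real.rpow_neg h1r.le]
  have hfin : |w r| ≤ (Real.sqrt (M/c₀) * (1+1/R₀)^α) * (1+r)^(-α) := by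
    calc |w r| = |y r| * (r^α)⁻¹ := h7
      _ ≤ Real.sqrt (M/c₀) * (r^α)⁻¹ := mul_le_mul_of_nonneg_right hyb (by positivity)
      _ ≤ Real.sqrt (M/c₀) * ((1+1/R₀)^α * (1+r)^(-α)) :=
          mul_le_mul_of_nonneg_left hpow (Real.sqrt_nonneg _)
      _ = (Real.sqrt (M/c₀) * (1+1/R₀)^α) * (1+r)^(-α) := by ring
  have hexpeq : -((n:ℝ)-1)/2 = -α := by rw [hαdef]; ring
  rw [hexpeq]
  exact hfin
end
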